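/- (Global examples in even dimensions.) For every m ≥ 3 there exists a smooth map φ : ℝ^{2m} ≅ ℂ^m → ℂ, defined on all of ℝ^{2m}, such that: (1) Δφ = 0 everywhere; (2) Σ_{i=1}^{2m} (∂φ/∂x^i)² = 0 everywhere (so φ is a harmonic morphism); (3) φ is a submersion; (4) φ is full, i.e. for every nonzero v ∈ ℝ^{2m} the directional derivative ∂_v φ does not vanish identically; (5) there exists a smooth map M : ℂ^m → so(m,ℂ) (skew-symmetric complex m×m matrices) such that φ is M-holomorphic, i.e. ∂φ/∂q̄^i + Σ_j M^j_{ī} ∂φ/∂q^j = 0 for each i; and (6) φ is not holomorphic with respect to any Kähler structure: there is no linear isometry J : ℝ^{2m} → ℝ^{2m} with J² = −Id such that dφ_x(Jv) = i·dφ_x(v) for all x and v. -/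

import Mathlib

open Complex BigOperators Matrix

/-- Partial derivative in the direction of the real coordinate `x^{2j-1}`,
identifying `ℝ^{2m} ≅ ℂ^m` via `q^j = x^{2j-1} + i x^{2j}`. -/
noncomputable def pdRe {m : ℕ} (f : (Fin m → ℂ) → ℂ) (j : Fin m) (x : Fin m → ℂ) : ℂ :=
  fderiv ℝ f x (Pi.single j 1)

/-- Partial derivative in the direction of the real coordinate `x^{2j}`. -/
noncomputable def pdIm {m : ℕ} (f : (Fin m → ℂ) → ℂ) (j : Fin m) (x : Fin m → ℂ) : ℂ :=
  fderiv ℝ f x (Pi.single j Complex.I)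

/-- Wirtinger derivative `∂f/∂q^j = ½(∂f/∂x^{2j-1} − i ∂f/∂x^{2j})`. -/
noncomputable def wdq {m : ℕ} (f : (Fin m → ℂ) → ℂ) (j : Fin m) (x : Fin m → ℂ) : ℂ :=
  (pdRe f j x - Complex.I * pdIm f j x) / 2

/-- Wirtinger derivative `∂f/∂q̄^j = ½(∂f/∂x^{2j-1} + i ∂f/∂x^{2j})`. -/
noncomputable def wdqbar {m : ℕ} (f : (Fin m → ℂ) → ℂ) (j : Fin m) (x : Fin m → ℂ) : ℂ :=
  (pdRe f j x + Complex.I * pdIm f j x) / 2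

/-- Laplacian `Δf = Σ_{i=1}^{2m} ∂²f/(∂x^i)²`. -/
noncomputable def lap {m : ℕ} (f : (Fin m → ℂ) → ℂ) (x : Fin m → ℂ) : ℂ :=
  ∑ j, (pdRe (fun y => pdRe f j y) j x + pdIm (fun y => pdIm f j y) j x)

/-- The horizontal weak conformality quantity `Σ_{i=1}^{2m} (∂f/∂x^i)²`. -/
noncomputable def hwc {m : ℕ} (f : (Fin m → ℂ) → ℂ) (x : Fin m → ℂ) : ℂ :=
  ∑ j, ((pdRe f j x) ^ 2 + (pdIm f j x) ^ 2)


namespace GE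
variable {m : ℕ}

def j0 (hm : 3 ≤ m) : Fin m := ⟨0, by omega⟩
def j1 (hm : 3 ≤ m) : Fin m := ⟨1, by omega⟩
def j2 (hm : 3 ≤ m) : Fin m := ⟨2, by omega⟩

lemma ne01 (hm : 3 ≤ m) : j0 hm ≠ j1 hm := by simp [j0, j1, Fin.ext_iff]
lemma ne02 (hm : 3 ≤ m) : j0 hm ≠ j2 hm := by simp [j0, j2, Fin.ext_iff]
lemma ne12 (hm : 3 ≤ m) : j1 hm ≠ j2 hm := by simp [j1, j2, Fin.ext_iff]

lemma hi_ne0 (hm : 3 ≤ m) {k : Fin m} (hk : 3 ≤ (k : ℕ)) : k ≠ j0 hm := by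
  simp [j0, Fin.ext_iff]; omega
lemma hi_ne1 (hm : 3 ≤ m) {k : Fin m} (hk : 3 ≤ (k : ℕ)) : k ≠ j1 hm := by
  simp [j1, Fin.ext_iff]; omega
lemma hi_ne2 (hm : 3 ≤ m) {k : Fin m} (hk : 3 ≤ (k : ℕ)) : k ≠ j2 hm := by
  simp [j2, Fin.ext_iff]; omega

lemma cases4 (hm : 3 ≤ m) (k : Fin m) :
    k = j0 hm ∨ k = j1 hm ∨ k = j2 hm ∨ 3 ≤ (k : ℕ) := by
  rcases Nat.lt_or_ge (k : ℕ) 3 with h | h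
  · interval_cases h' : (k : ℕ) <;>
      [exact Or.inl (by simp [j0, Fin.ext_iff, h']);
       exact Or.inr (Or.inl (by simp [j1, Fin.ext_iff, h']));
       exact Or.inr (Or.inr (Or.inl (by simp [j2, Fin.ext_iff, h'])))]
  · exact Or.inr (Or.inr (Or.inr h))

noncomputable def wt {m : ℕ} (j : Fin m) : ℂ := if 3 ≤ (j : ℕ) then 1 else 0

lemma wt_j0 (hm : 3 ≤ m) : wt (j0 hm) = 0 := by simp [wt, j0]
lemma wt_j1 (hm : 3 ≤ m) : wt (j1 hm) = 0 := by simp [wt, j1]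
lemma wt_j2 (hm : 3 ≤ m) : wt (j2 hm) = 0 := by simp [wt, j2]
lemma wt_hi {j : Fin m} (hj : 3 ≤ (j : ℕ)) : wt j = 1 := by simp [wt, hj]

noncomputable def phi (hm : 3 ≤ m) (x : Fin m → ℂ) : ℂ :=
  x (j1 hm) + x (j0 hm) * x (j2 hm)
    + x (j0 hm) * x (j0 hm) * x (j0 hm) * (starRingEnd ℂ) (x (j1 hm))
    - x (j0 hm) * x (j0 hm) * (starRingEnd ℂ) (x (j2 hm))
    + ∑ j, wt j * (x j * x j)

lemma hp (i : Fin m) (x : Fin m → ℂ) :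
    HasFDerivAt (fun y : Fin m → ℂ => y i)
      (ContinuousLinearMap.proj (R := ℝ) (φ := fun _ : Fin m => ℂ) i) x :=
  hasFDerivAt_apply i x

lemma hconj (i : Fin m) (x : Fin m → ℂ) :
    HasFDerivAt (fun y : Fin m → ℂ => (starRingEnd ℂ) (y i))
      ((Complex.conjCLE.toContinuousLinearMap).comp
        (ContinuousLinearMap.proj (R := ℝ) (φ := fun _ : Fin m => ℂ) i)) x := by
  have h := (Complex.conjCLE.toContinuousLinearMap.hasFDerivAt
      (x := x i)).comp x (hp i x)
  have e : (fun y : Fin m → ℂ => (starRingEnd ℂ) (y i))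
      = (⇑Complex.conjCLE.toContinuousLinearMap ∘ fun y : Fin m → ℂ => y i) := by
    ext y; simp
  rw [e]; exact h

lemma fderiv_phi (hm : 3 ≤ m) (x v : Fin m → ℂ) :
    fderiv ℝ (phi hm) x v =
      v (j1 hm) + x (j0 hm) * v (j2 hm) + x (j2 hm) * v (j0 hm)
      + x (j0 hm) * x (j0 hm) * x (j0 hm) * (starRingEnd ℂ) (v (j1 hm))
      + 3 * (x (j0 hm) * x (j0 hm)) * (starRingEnd ℂ) (x (j1 hm)) * v (j0 hm)
      - x (j0 hm) * x (j0 hm) * (starRingEnd ℂ) (v (j2 hm))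
      - 2 * x (j0 hm) * (starRingEnd ℂ) (x (j2 hm)) * v (j0 hm)
      + ∑ j, wt j * (2 * x j * v j) := by
  have h : HasFDerivAt (phi hm) _ x :=
    ((((hp (j1 hm) x).add ((hp (j0 hm) x).mul (hp (j2 hm) x))).add
      ((((hp (j0 hm) x).mul (hp (j0 hm) x)).mul (hp (j0 hm) x)).mul (hconj (j1 hm) x))).sub
      (((hp (j0 hm) x).mul (hp (j0 hm) x)).mul (hconj (j2 hm) x))).add
      (HasFDerivAt.fun_sum (fun j _ => ((hasFDerivAt_const (wt j) x).mul
        ((hp j x).mul (hp j x)))))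
  rw [h.fderiv]
  simp only [ContinuousLinearMap.add_apply, ContinuousLinearMap.sub_apply,
    ContinuousLinearMap.smul_apply, ContinuousLinearMap.coe_comp', Function.comp_apply,
    ContinuousLinearMap.proj_apply, ContinuousLinearMap.coe_sum', Finset.sum_apply,
    ContinuousLinearEquiv.coe_coe, Complex.conjCLE_apply, smul_eq_mul,
    ContinuousLinearMap.zero_apply, zero_mul, mul_zero, add_zero, zero_add, Pi.mul_apply]
  rw [Finset.sum_congr rfl (fun j _ => by ring_nf : ∀ j ∈ Finset.univ,
    wt j * (x j * v j + x j * v j) = wt j * (2 * x j * v j))]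
  ring

lemma sum_wt_v_single (x : Fin m → ℂ) (k : Fin m) (c : ℂ) :
    ∑ j, wt j * (2 * x j * (Pi.single k c : Fin m → ℂ) j) = wt k * (2 * x k * c) := by
  rw [Finset.sum_eq_single k]
  · rw [Pi.single_eq_same]
  · intro j _ hjk; rw [Pi.single_eq_of_ne hjk]; ring
  · intro h; exact absurd (Finset.mem_univ k) h

lemma sum_wt_x_single (v : Fin m → ℂ) (k : Fin m) (c : ℂ) :
    ∑ j, wt j * (2 * (Pi.single k c : Fin m → ℂ) j * v j) = wt k * (2 * c * v k) := by
  rw [Finset.sum_eq_single k]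
  · rw [Pi.single_eq_same]
  · intro j _ hjk; rw [Pi.single_eq_of_ne hjk]; ring
  · intro h; exact absurd (Finset.mem_univ k) h

/-- derivative in direction `j0` -/
lemma dphi0 (hm : 3 ≤ m) (x : Fin m → ℂ) (c : ℂ) :
    fderiv ℝ (phi hm) x (Pi.single (j0 hm) c) =
      (x (j2 hm) + 3 * (x (j0 hm) * x (j0 hm)) * (starRingEnd ℂ) (x (j1 hm))
        - 2 * x (j0 hm) * (starRingEnd ℂ) (x (j2 hm))) * c := by
  rw [fderiv_phi hm x, sum_wt_v_single, wt_j0 hm]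
  simp only [Pi.single_apply, eq_self_iff_true, if_true, if_neg (Ne.symm (ne01 hm)),
    if_neg (Ne.symm (ne02 hm)), map_zero]
  ring

/-- derivative in direction `j1` -/
lemma dphi1 (hm : 3 ≤ m) (x : Fin m → ℂ) (c : ℂ) :
    fderiv ℝ (phi hm) x (Pi.single (j1 hm) c) =
      c + x (j0 hm) * x (j0 hm) * x (j0 hm) * (starRingEnd ℂ) c := by
  rw [fderiv_phi hm x, sum_wt_v_single, wt_j1 hm]
  simp only [Pi.single_apply, eq_self_iff_true, if_true, if_neg (ne01 hm),
    if_neg (Ne.symm (ne12 hm)), map_zero]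
  ring

/-- derivative in direction `j2` -/
lemma dphi2 (hm : 3 ≤ m) (x : Fin m → ℂ) (c : ℂ) :
    fderiv ℝ (phi hm) x (Pi.single (j2 hm) c) =
      x (j0 hm) * c - x (j0 hm) * x (j0 hm) * (starRingEnd ℂ) c := by
  rw [fderiv_phi hm x, sum_wt_v_single, wt_j2 hm]
  simp only [Pi.single_apply, eq_self_iff_true, if_true, if_neg (ne02 hm),
    if_neg (ne12 hm), map_zero]
  ring

/-- derivative in a high direction -/
lemma dphiH (hm : 3 ≤ m) (x : Fin m → ℂ) {k : Fin m} (hk : 3 ≤ (k : ℕ)) (c : ℂ) :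
    fderiv ℝ (phi hm) x (Pi.single k c) = 2 * x k * c := by
  rw [fderiv_phi hm x, sum_wt_v_single, wt_hi hk]
  simp only [Pi.single_apply, eq_self_iff_true, if_true, if_neg (Ne.symm (hi_ne0 hm hk)),
    if_neg (Ne.symm (hi_ne1 hm hk)), if_neg (Ne.symm (hi_ne2 hm hk)), map_zero]
  ring


section values
variable (hm : 3 ≤ m) (x : Fin m → ℂ)

lemma wdq0 : wdq (phi hm) (j0 hm) x
    = x (j2 hm) + 3 * (x (j0 hm) * x (j0 hm)) * (starRingEnd ℂ) (x (j1 hm))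
      - 2 * x (j0 hm) * (starRingEnd ℂ) (x (j2 hm)) := by
  rw [wdq, pdRe, pdIm, dphi0 hm x, dphi0 hm x]
  linear_combination (-(x (j2 hm) + 3 * (x (j0 hm) * x (j0 hm)) * (starRingEnd ℂ) (x (j1 hm))
      - 2 * x (j0 hm) * (starRingEnd ℂ) (x (j2 hm))) / 2) * Complex.I_sq

lemma wdqbar0 : wdqbar (phi hm) (j0 hm) x = 0 := by
  rw [wdqbar, pdRe, pdIm, dphi0 hm x, dphi0 hm x]
  linear_combination ((x (j2 hm) + 3 * (x (j0 hm) * x (j0 hm)) * (starRingEnd ℂ) (x (j1 hm))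
      - 2 * x (j0 hm) * (starRingEnd ℂ) (x (j2 hm))) / 2) * Complex.I_sq

lemma wdq1 : wdq (phi hm) (j1 hm) x = 1 := by
  rw [wdq, pdRe, pdIm, dphi1 hm x, dphi1 hm x]
  simp only [RingHom.map_one, Complex.conj_I]
  linear_combination (x (j0 hm) * x (j0 hm) * x (j0 hm) / 2 - 1/2 : ℂ) * Complex.I_sq

lemma wdqbar1 : wdqbar (phi hm) (j1 hm) x
    = x (j0 hm) * x (j0 hm) * x (j0 hm) := by
  rw [wdqbar, pdRe, pdIm, dphi1 hm x, dphi1 hm x]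
  simp only [RingHom.map_one, Complex.conj_I]
  linear_combination ((1 : ℂ)/2 - x (j0 hm) * x (j0 hm) * x (j0 hm) / 2) * Complex.I_sq

lemma wdq2 : wdq (phi hm) (j2 hm) x = x (j0 hm) := by
  rw [wdq, pdRe, pdIm, dphi2 hm x, dphi2 hm x]
  simp only [RingHom.map_one, Complex.conj_I]
  linear_combination (-(x (j0 hm))/2 - x (j0 hm) * x (j0 hm) / 2) * Complex.I_sq

lemma wdqbar2 : wdqbar (phi hm) (j2 hm) x = -(x (j0 hm) * x (j0 hm)) := by
  rw [wdqbar, pdRe, pdIm, dphi2 hm x, dphi2 hm x]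
  simp only [RingHom.map_one, Complex.conj_I]
  linear_combination ((x (j0 hm))/2 + x (j0 hm) * x (j0 hm) / 2) * Complex.I_sq

lemma wdqH {k : Fin m} (hk : 3 ≤ (k : ℕ)) : wdq (phi hm) k x = 2 * x k := by
  rw [wdq, pdRe, pdIm, dphiH hm x hk, dphiH hm x hk]
  linear_combination (-(x k)) * Complex.I_sq

lemma wdqbarH {k : Fin m} (hk : 3 ≤ (k : ℕ)) : wdqbar (phi hm) k x = 0 := by
  rw [wdqbar, pdRe, pdIm, dphiH hm x hk, dphiH hm x hk]
  linear_combination (x k) * Complex.I_sq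

end values


lemma d2_0 (hm : 3 ≤ m) (x : Fin m → ℂ) (c d : ℂ) :
    fderiv ℝ (fun y : Fin m → ℂ =>
      (y (j2 hm) + 3 * (y (j0 hm) * y (j0 hm)) * (starRingEnd ℂ) (y (j1 hm))
        - 2 * y (j0 hm) * (starRingEnd ℂ) (y (j2 hm))) * c) x (Pi.single (j0 hm) d)
    = (6 * x (j0 hm) * (starRingEnd ℂ) (x (j1 hm))
        - 2 * (starRingEnd ℂ) (x (j2 hm))) * d * c := by
  have h : HasFDerivAt (fun y : Fin m → ℂ =>
      (y (j2 hm) + 3 * (y (j0 hm) * y (j0 hm)) * (starRingEnd ℂ) (y (j1 hm))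
        - 2 * y (j0 hm) * (starRingEnd ℂ) (y (j2 hm))) * c) _ x :=
    (((hp (j2 hm) x).add (((hasFDerivAt_const (3:ℂ) x).mul
        ((hp (j0 hm) x).mul (hp (j0 hm) x))).mul (hconj (j1 hm) x))).sub
      (((hasFDerivAt_const (2:ℂ) x).mul (hp (j0 hm) x)).mul (hconj (j2 hm) x))).mul
      (hasFDerivAt_const c x)
  rw [h.fderiv]
  simp only [ContinuousLinearMap.add_apply, ContinuousLinearMap.sub_apply,
    ContinuousLinearMap.smul_apply, ContinuousLinearMap.coe_comp', Function.comp_apply,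
    ContinuousLinearMap.proj_apply, ContinuousLinearEquiv.coe_coe, Complex.conjCLE_apply,
    smul_eq_mul, ContinuousLinearMap.zero_apply, zero_mul, mul_zero, add_zero, zero_add,
    Pi.single_apply, eq_self_iff_true, if_true, if_neg (Ne.symm (ne01 hm)),
    if_neg (Ne.symm (ne02 hm)), map_zero]
  ring

lemma d2_1 (hm : 3 ≤ m) (x : Fin m → ℂ) (c d : ℂ) :
    fderiv ℝ (fun y : Fin m → ℂ =>
      c + y (j0 hm) * y (j0 hm) * y (j0 hm) * (starRingEnd ℂ) c) x
      (Pi.single (j1 hm) d) = 0 := by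
  have h : HasFDerivAt (fun y : Fin m → ℂ =>
      c + y (j0 hm) * y (j0 hm) * y (j0 hm) * (starRingEnd ℂ) c) _ x :=
    (hasFDerivAt_const c x).add
      ((((hp (j0 hm) x).mul (hp (j0 hm) x)).mul (hp (j0 hm) x)).mul
        (hasFDerivAt_const ((starRingEnd ℂ) c) x))
  rw [h.fderiv]
  simp only [ContinuousLinearMap.add_apply, ContinuousLinearMap.smul_apply,
    ContinuousLinearMap.proj_apply, smul_eq_mul, ContinuousLinearMap.zero_apply,
    Pi.single_apply, if_neg (ne01 hm), mul_zero, zero_mul, add_zero, zero_add]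

lemma d2_2 (hm : 3 ≤ m) (x : Fin m → ℂ) (c d : ℂ) :
    fderiv ℝ (fun y : Fin m → ℂ =>
      y (j0 hm) * c - y (j0 hm) * y (j0 hm) * (starRingEnd ℂ) c) x
      (Pi.single (j2 hm) d) = 0 := by
  have h : HasFDerivAt (fun y : Fin m → ℂ =>
      y (j0 hm) * c - y (j0 hm) * y (j0 hm) * (starRingEnd ℂ) c) _ x :=
    ((hp (j0 hm) x).mul (hasFDerivAt_const c x)).sub
      (((hp (j0 hm) x).mul (hp (j0 hm) x)).mul
        (hasFDerivAt_const ((starRingEnd ℂ) c) x))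
  rw [h.fderiv]
  simp only [ContinuousLinearMap.sub_apply, ContinuousLinearMap.add_apply,
    ContinuousLinearMap.smul_apply, ContinuousLinearMap.proj_apply, smul_eq_mul,
    ContinuousLinearMap.zero_apply, Pi.single_apply, if_neg (ne02 hm),
    mul_zero, zero_mul, add_zero, zero_add, sub_zero, sub_self]

lemma d2_H (hm : 3 ≤ m) (x : Fin m → ℂ) (k : Fin m) (c d : ℂ) :
    fderiv ℝ (fun y : Fin m → ℂ => 2 * y k * c) x (Pi.single k d) = 2 * d * c := by
  have h : HasFDerivAt (fun y : Fin m → ℂ => 2 * y k * c) _ x :=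
    (((hasFDerivAt_const (2:ℂ) x).mul (hp k x)).mul (hasFDerivAt_const c x))
  rw [h.fderiv]
  simp only [ContinuousLinearMap.add_apply, ContinuousLinearMap.smul_apply,
    ContinuousLinearMap.proj_apply, smul_eq_mul, ContinuousLinearMap.zero_apply,
    Pi.single_eq_same, mul_zero, zero_mul, add_zero, zero_add]
  ring

lemma lap_phi (hm : 3 ≤ m) (x : Fin m → ℂ) : lap (phi hm) x = 0 := by
  rw [lap]
  apply Finset.sum_eq_zero
  intro k _
  rcases cases4 hm k with hk | hk | hk | hk
  · subst hk
    have e1 : (fun y => pdRe (phi hm) (j0 hm) y) = (fun y : Fin m → ℂ =>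
        (y (j2 hm) + 3 * (y (j0 hm) * y (j0 hm)) * (starRingEnd ℂ) (y (j1 hm))
          - 2 * y (j0 hm) * (starRingEnd ℂ) (y (j2 hm))) * 1) := by
      funext y; rw [pdRe, dphi0 hm y]
    have e2 : (fun y => pdIm (phi hm) (j0 hm) y) = (fun y : Fin m → ℂ =>
        (y (j2 hm) + 3 * (y (j0 hm) * y (j0 hm)) * (starRingEnd ℂ) (y (j1 hm))
          - 2 * y (j0 hm) * (starRingEnd ℂ) (y (j2 hm))) * Complex.I) := by
      funext y; rw [pdIm, dphi0 hm y]
    rw [pdRe, pdIm, e1, e2, d2_0 hm x, d2_0 hm x]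
    linear_combination (6 * x (j0 hm) * (starRingEnd ℂ) (x (j1 hm))
        - 2 * (starRingEnd ℂ) (x (j2 hm))) * Complex.I_sq
  · subst hk
    have e1 : (fun y => pdRe (phi hm) (j1 hm) y) = (fun y : Fin m → ℂ =>
        (1:ℂ) + y (j0 hm) * y (j0 hm) * y (j0 hm) * (starRingEnd ℂ) 1) := by
      funext y; rw [pdRe, dphi1 hm y]
    have e2 : (fun y => pdIm (phi hm) (j1 hm) y) = (fun y : Fin m → ℂ =>
        Complex.I + y (j0 hm) * y (j0 hm) * y (j0 hm) * (starRingEnd ℂ) Complex.I) := by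
      funext y; rw [pdIm, dphi1 hm y]
    rw [pdRe, pdIm, e1, e2, d2_1 hm x, d2_1 hm x, add_zero]
  · subst hk
    have e1 : (fun y => pdRe (phi hm) (j2 hm) y) = (fun y : Fin m → ℂ =>
        y (j0 hm) * 1 - y (j0 hm) * y (j0 hm) * (starRingEnd ℂ) 1) := by
      funext y; rw [pdRe, dphi2 hm y]
    have e2 : (fun y => pdIm (phi hm) (j2 hm) y) = (fun y : Fin m → ℂ =>
        y (j0 hm) * Complex.I - y (j0 hm) * y (j0 hm) * (starRingEnd ℂ) Complex.I) := by
      funext y; rw [pdIm, dphi2 hm y]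
    rw [pdRe, pdIm, e1, e2, d2_2 hm x, d2_2 hm x, add_zero]
  · have e1 : (fun y => pdRe (phi hm) k y) = (fun y : Fin m → ℂ => 2 * y k * 1) := by
      funext y; rw [pdRe, dphiH hm y hk]
    have e2 : (fun y => pdIm (phi hm) k y) = (fun y : Fin m → ℂ => 2 * y k * Complex.I) := by
      funext y; rw [pdIm, dphiH hm y hk]
    rw [pdRe, pdIm, e1, e2, d2_H hm x, d2_H hm x]
    linear_combination (2:ℂ) * Complex.I_sq

lemma hwc_phi (hm : 3 ≤ m) (x : Fin m → ℂ) : hwc (phi hm) x = 0 := by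
  rw [hwc]
  have key : ∀ k : Fin m, (pdRe (phi hm) k x) ^ 2 + (pdIm (phi hm) k x) ^ 2
      = (if k = j1 hm then 4 * (x (j0 hm) * x (j0 hm) * x (j0 hm)) else 0)
        + (if k = j2 hm then -(4 * (x (j0 hm) * x (j0 hm) * x (j0 hm))) else 0) := by
    intro k
    rcases cases4 hm k with hk | hk | hk | hk
    · subst hk
      rw [if_neg (ne01 hm), if_neg (ne02 hm), pdRe, pdIm, dphi0 hm x, dphi0 hm x]
      linear_combination ((x (j2 hm) + 3 * (x (j0 hm) * x (j0 hm)) * (starRingEnd ℂ) (x (j1 hm))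
        - 2 * x (j0 hm) * (starRingEnd ℂ) (x (j2 hm)))^2) * Complex.I_sq
    · subst hk
      rw [if_pos rfl, if_neg (ne12 hm), pdRe, pdIm, dphi1 hm x, dphi1 hm x]
      simp only [RingHom.map_one, Complex.conj_I]
      linear_combination ((1 - x (j0 hm) * x (j0 hm) * x (j0 hm))^2) * Complex.I_sq
    · subst hk
      rw [if_neg (Ne.symm (ne12 hm)), if_pos rfl, pdRe, pdIm, dphi2 hm x, dphi2 hm x]
      simp only [RingHom.map_one, Complex.conj_I]
      linear_combination ((x (j0 hm) + x (j0 hm) * x (j0 hm))^2) * Complex.I_sq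
    · rw [if_neg (hi_ne1 hm hk), if_neg (hi_ne2 hm hk), pdRe, pdIm,
        dphiH hm x hk, dphiH hm x hk]
      linear_combination ((2 * x k)^2) * Complex.I_sq
  rw [Finset.sum_congr rfl (fun k _ => key k), Finset.sum_add_distrib,
    Finset.sum_ite_eq' Finset.univ, Finset.sum_ite_eq' Finset.univ]
  simp


lemma fderiv_at_zero (hm : 3 ≤ m) (v : Fin m → ℂ) :
    fderiv ℝ (phi hm) 0 v = v (j1 hm) := by
  rw [fderiv_phi hm]
  simp

lemma fderiv_at_single0 (hm : 3 ≤ m) (t : ℂ) (v : Fin m → ℂ) :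
    fderiv ℝ (phi hm) (Pi.single (j0 hm) t) v =
      v (j1 hm) + t * v (j2 hm) + t * t * t * (starRingEnd ℂ) (v (j1 hm))
        - t * t * (starRingEnd ℂ) (v (j2 hm)) := by
  rw [fderiv_phi hm, sum_wt_x_single, wt_j0 hm]
  simp only [Pi.single_apply, eq_self_iff_true, if_true, if_neg (Ne.symm (ne01 hm)),
    if_neg (Ne.symm (ne02 hm)), map_zero]
  ring

lemma fderiv_at_single2 (hm : 3 ≤ m) (v : Fin m → ℂ) :
    fderiv ℝ (phi hm) (Pi.single (j2 hm) 1) v = v (j1 hm) + v (j0 hm) := by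
  rw [fderiv_phi hm, sum_wt_x_single, wt_j2 hm]
  simp only [Pi.single_apply, eq_self_iff_true, if_true, if_neg (ne02 hm),
    if_neg (ne12 hm), map_zero]
  ring

lemma fderiv_at_singleH (hm : 3 ≤ m) {k : Fin m} (hk : 3 ≤ (k : ℕ)) (v : Fin m → ℂ) :
    fderiv ℝ (phi hm) (Pi.single k 1) v = v (j1 hm) + 2 * v k := by
  rw [fderiv_phi hm, sum_wt_x_single, wt_hi hk]
  simp only [Pi.single_apply, eq_self_iff_true, if_true, if_neg (Ne.symm (hi_ne0 hm hk)),
    if_neg (Ne.symm (hi_ne1 hm hk)), if_neg (Ne.symm (hi_ne2 hm hk)), map_zero]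
  ring

lemma fderiv_pair (hm : 3 ≤ m) (q : Fin m → ℂ) (z w : ℂ) :
    fderiv ℝ (phi hm) q (Pi.single (j1 hm) z + Pi.single (j2 hm) w) =
      z + q (j0 hm) * w + q (j0 hm) * q (j0 hm) * q (j0 hm) * (starRingEnd ℂ) z
        - q (j0 hm) * q (j0 hm) * (starRingEnd ℂ) w := by
  rw [fderiv_phi hm]
  have hs : ∑ j, wt j * (2 * q j *
      (Pi.single (j1 hm) z + Pi.single (j2 hm) w : Fin m → ℂ) j) = 0 := by
    apply Finset.sum_eq_zero
    intro j _
    by_cases h1 : j = j1 hm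
    · subst h1; rw [wt_j1 hm]; ring
    · by_cases h2 : j = j2 hm
      · subst h2; rw [wt_j2 hm]; ring
      · simp [Pi.single_eq_of_ne h1, Pi.single_eq_of_ne h2]
  rw [hs]
  simp only [Pi.add_apply, Pi.single_apply, eq_self_iff_true, if_true,
    if_neg (Ne.symm (ne01 hm)), if_neg (Ne.symm (ne02 hm)), if_neg (ne01 hm),
    if_neg (Ne.symm (ne12 hm)), if_neg (ne02 hm), if_neg (ne12 hm),
    add_zero, zero_add, map_add, map_zero]
  ring

lemma contDiff_phi (hm : 3 ≤ m) : ContDiff ℝ (⊤ : ℕ∞) (phi hm) := by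
  have hcoord : ∀ i : Fin m, ContDiff ℝ (⊤ : ℕ∞) (fun y : Fin m → ℂ => y i) :=
    fun i => contDiff_apply ℝ ℂ i
  have hconj' : ∀ i : Fin m, ContDiff ℝ (⊤ : ℕ∞) (fun y : Fin m → ℂ => (starRingEnd ℂ) (y i)) := by
    intro i
    have := (Complex.conjCLE.contDiff (n := (⊤ : ℕ∞))).comp (hcoord i)
    exact this
  unfold phi
  apply ContDiff.add
  apply ContDiff.sub
  apply ContDiff.add
  apply ContDiff.add
  · exact hcoord _
  · exact (hcoord _).mul (hcoord _)
  · exact (((hcoord _).mul (hcoord _)).mul (hcoord _)).mul (hconj' _)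
  · exact ((hcoord _).mul (hcoord _)).mul (hconj' _)
  · exact ContDiff.sum fun j _ => contDiff_const.mul ((hcoord _).mul (hcoord _))

noncomputable def Mx (hm : 3 ≤ m) (q : Fin m → ℂ) : Matrix (Fin m) (Fin m) ℂ :=
  Matrix.of fun i j =>
    if i = j1 hm ∧ j = j2 hm then q (j0 hm) * q (j0 hm)
    else if i = j2 hm ∧ j = j1 hm then -(q (j0 hm) * q (j0 hm)) else 0

lemma Mx_smooth (hm : 3 ≤ m) (i j : Fin m) :
    ContDiff ℝ (⊤ : ℕ∞) (fun q : Fin m → ℂ => Mx hm q i j) := by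
  have hcoord : ContDiff ℝ (⊤ : ℕ∞) (fun y : Fin m → ℂ => y (j0 hm)) :=
    contDiff_apply ℝ ℂ _
  by_cases h1 : i = j1 hm ∧ j = j2 hm
  · simp only [Mx, Matrix.of_apply, if_pos h1]
    exact hcoord.mul hcoord
  · by_cases h2 : i = j2 hm ∧ j = j1 hm
    · simp only [Mx, Matrix.of_apply, if_neg h1, if_pos h2]
      exact (hcoord.mul hcoord).neg
    · simp only [Mx, Matrix.of_apply, if_neg h1, if_neg h2]
      exact contDiff_const

lemma Mx_skew (hm : 3 ≤ m) (q : Fin m → ℂ) : (Mx hm q)ᵀ = -(Mx hm q) := by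
  ext i j
  simp only [Matrix.transpose_apply, Matrix.neg_apply, Mx, Matrix.of_apply]
  rcases cases4 hm i with hi | hi | hi | hi <;> rcases cases4 hm j with hj | hj | hj | hj <;>
    simp_all [ne01 hm, ne02 hm, ne12 hm, (ne01 hm).symm, (ne02 hm).symm, (ne12 hm).symm,
      hi_ne0 hm, hi_ne1 hm, hi_ne2 hm]

end GE

open GE in
/-- global examples in even dimensions: for every `m ≥ 3` there is
a smooth, globally defined `φ : ℝ^{2m} ≅ ℂ^m → ℂ` which is harmonic,
horizontally weakly conformal (hence a harmonic morphism), submersive, full,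
holomorphic with respect to some smooth almost Hermitian structure `J(M)`
(`M` smooth, skew-symmetric), but not holomorphic with respect to any Kähler
structure (constant orthogonal complex structure) on `ℝ^{2m}`. -/
theorem global_even_example {m : ℕ} (hm : 3 ≤ m) :
    ∃ φ : (Fin m → ℂ) → ℂ, ContDiff ℝ (⊤ : ℕ∞) φ
      ∧ (∀ q, lap φ q = 0)
      ∧ (∀ q, hwc φ q = 0)
      ∧ (∀ q, Function.Surjective (fderiv ℝ φ q))
      ∧ (∀ v : Fin m → ℂ, v ≠ 0 → ∃ q, fderiv ℝ φ q v ≠ 0)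
      ∧ (∃ M : (Fin m → ℂ) → Matrix (Fin m) (Fin m) ℂ,
           (∀ i j, ContDiff ℝ (⊤ : ℕ∞) (fun q => M q i j))
           ∧ (∀ q, (M q)ᵀ = -(M q))
           ∧ (∀ q, ∀ i, wdqbar φ i q + ∑ j, M q j i * wdq φ j q = 0))
      ∧ ¬ (∃ J : (Fin m → ℂ) →ₗ[ℝ] (Fin m → ℂ),
            (∀ v w : Fin m → ℂ,
              (∑ j, starRingEnd ℂ (J v j) * J w j).re
                = (∑ j, starRingEnd ℂ (v j) * w j).re)
            ∧ (∀ v, J (J v) = -v)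
            ∧ (∀ x v, fderiv ℝ φ x (J v) = Complex.I * fderiv ℝ φ x v)) := by
  refine ⟨phi hm, contDiff_phi hm, lap_phi hm, hwc_phi hm, ?_, ?_, ?_, ?_⟩
  · -- submersion
    intro q c
    set q0 := q (j0 hm) with hq0
    have hr : q0 * (starRingEnd ℂ) q0 = (Complex.normSq q0 : ℂ) := Complex.mul_conj q0
    set d : ℂ := 1 + (Complex.normSq q0 : ℂ) ^ 2 with hdef
    have hd0 : d ≠ 0 := by
      have h1 : d = ((1 + (Complex.normSq q0) ^ 2 : ℝ) : ℂ) := by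
        rw [hdef]; push_cast; ring
      have h2 : (0:ℝ) < 1 + (Complex.normSq q0) ^ 2 := by positivity
      rw [h1]
      exact_mod_cast h2.ne'
    refine ⟨Pi.single (j1 hm) (c / d)
      + Pi.single (j2 hm) (-(q0 * q0) * (starRingEnd ℂ) (c / d)), ?_⟩
    rw [fderiv_pair hm q]
    have key : ∀ z : ℂ,
        z + q0 * (-(q0 * q0) * (starRingEnd ℂ) z)
          + q0 * q0 * q0 * (starRingEnd ℂ) z
          - q0 * q0 * (starRingEnd ℂ) (-(q0 * q0) * (starRingEnd ℂ) z) = d * z := by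
      intro z
      simp only [RingHom.map_mul, RingHom.map_neg, Complex.conj_conj]
      rw [hdef, show ((Complex.normSq q0 : ℂ)) ^ 2 = (q0 * (starRingEnd ℂ) q0) ^ 2 by
        rw [hr]]
      ring
    rw [key (c / d), mul_comm, div_mul_cancel₀ c hd0]
  · -- fullness
    intro v hv
    by_contra hcon
    push_neg at hcon
    apply hv
    have h1 : v (j1 hm) = 0 := by
      have := hcon 0; rwa [fderiv_at_zero hm] at this
    have h2 : v (j2 hm) = 0 := by
      have e1 := hcon (Pi.single (j0 hm) 1)
      rw [fderiv_at_single0 hm] at e1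
      have e2 := hcon (Pi.single (j0 hm) (-1))
      rw [fderiv_at_single0 hm] at e2
      rw [h1] at e1 e2
      simp only [map_zero] at e1 e2
      linear_combination (e1 - e2) / 2
    have h0 : v (j0 hm) = 0 := by
      have := hcon (Pi.single (j2 hm) 1)
      rw [fderiv_at_single2 hm, h1] at this
      linear_combination this
    have hH : ∀ k : Fin m, 3 ≤ (k : ℕ) → v k = 0 := by
      intro k hk
      have := hcon (Pi.single k 1)
      rw [fderiv_at_singleH hm hk, h1] at this
      linear_combination this / 2
    funext k
    rcases cases4 hm k with hk | hk | hk | hk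
    · rw [hk]; exact h0
    · rw [hk]; exact h1
    · rw [hk]; exact h2
    · exact hH k hk
  · -- M-holomorphy
    refine ⟨Mx hm, Mx_smooth hm, Mx_skew hm, ?_⟩
    intro q i
    rcases cases4 hm i with hi | hi | hi | hi
    · subst hi
      rw [wdqbar0 hm, Finset.sum_eq_zero, add_zero]
      intro j _
      have hz : Mx hm q j (j0 hm) = 0 := by
        simp [Mx, ne01 hm, ne02 hm]
      rw [hz, zero_mul]
    · subst hi
      rw [wdqbar1 hm, Finset.sum_eq_single (j2 hm)]
      · have hz : Mx hm q (j2 hm) (j1 hm) = -(q (j0 hm) * q (j0 hm)) := by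
          simp [Mx, (ne12 hm).symm]
        rw [hz, wdq2 hm]; ring
      · intro j _ hj
        have hz : Mx hm q j (j1 hm) = 0 := by
          simp [Mx, ne12 hm, hj]
        rw [hz, zero_mul]
      · intro hmem; exact absurd (Finset.mem_univ _) hmem
    · subst hi
      rw [wdqbar2 hm, Finset.sum_eq_single (j1 hm)]
      · have hz : Mx hm q (j1 hm) (j2 hm) = q (j0 hm) * q (j0 hm) := by
          simp [Mx]
        rw [hz, wdq1 hm]; ring
      · intro j _ hj
        have hz : Mx hm q j (j2 hm) = 0 := by
          simp [Mx, (ne12 hm).symm, hj]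
        rw [hz, zero_mul]
      · intro hmem; exact absurd (Finset.mem_univ _) hmem
    · rw [wdqbarH hm q hi, Finset.sum_eq_zero, add_zero]
      intro j _
      have hz : Mx hm q j i = 0 := by
        simp [Mx, hi_ne1 hm hi, hi_ne2 hm hi]
      rw [hz, zero_mul]
  · -- not Kaehler-holomorphic
    rintro ⟨J, -, -, h3⟩
    set w := J (Pi.single (j1 hm) 1) with hw
    have E : ∀ t : ℂ,
        w (j1 hm) + t * w (j2 hm) + t * t * t * (starRingEnd ℂ) (w (j1 hm))
          - t * t * (starRingEnd ℂ) (w (j2 hm))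
        = Complex.I * (1 + t * t * t) := by
      intro t
      have h := h3 (Pi.single (j0 hm) t) (Pi.single (j1 hm) 1)
      rw [fderiv_at_single0 hm, fderiv_at_single0 hm] at h
      rw [← hw] at h
      rw [Pi.single_eq_same, Pi.single_eq_of_ne (Ne.symm (ne12 hm))] at h
      simp only [RingHom.map_one, RingHom.map_zero] at h
      linear_combination h
    have E0 := E 0
    have E1 := E 1
    have Em := E (-1)
    have hw1 : w (j1 hm) = Complex.I := by linear_combination E0
    have hcw1 : (starRingEnd ℂ) (w (j1 hm)) = -Complex.I := by
      rw [hw1]; exact Complex.conj_I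
    have hA : w (j2 hm) - (starRingEnd ℂ) (w (j2 hm)) = 2 * Complex.I := by
      linear_combination E1 - hw1 - hcw1
    have hB : w (j2 hm) + (starRingEnd ℂ) (w (j2 hm)) = 2 * Complex.I := by
      linear_combination (-1 : ℂ) * Em + hw1 - hcw1
    have hcz : (starRingEnd ℂ) (w (j2 hm)) = 0 := by
      linear_combination (hB - hA) / 2
    have hz2 : w (j2 hm) = 2 * Complex.I := by
      linear_combination (hA + hB) / 2
    rw [hz2] at hcz
    simp [Complex.ext_iff] at hcz
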